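/- Existence criterion for spherical triangles. Let l₁₂, l₁₃, l₂₃ ∈ [0,π]. There exist unit vectors u₁, u₂, u₃ ∈ ℝ³ with arccos⟨u_i,u_j⟩ = l_{ij} for all i < j if and only if the triangle inequalities l₁₂ ≤ l₁₃ + l₂₃, l₁₃ ≤ l₁₂ + l₂₃, l₂₃ ≤ l₁₂ + l₁₃ hold and l₁₂ + l₁₃ + l₂₃ ≤ 2π. -/

import Mathlib

open Real
open scoped RealInnerProductSpace

private lemma arccos_anti {x y : ℝ} (h : x ≤ y) : Real.arccos y ≤ Real.arccos x := by
  simp only [Real.arccos]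
  linarith [Real.monotone_arcsin h]

private lemma inner_lower_bound {E : Type*} [NormedAddCommGroup E] [InnerProductSpace ℝ E]
    {u v w : E} (hu : ‖u‖ = 1) (hv : ‖v‖ = 1) (hw : ‖w‖ = 1) :
    ⟪u, v⟫ * ⟪u, w⟫ - Real.sqrt (1 - ⟪u, v⟫ ^ 2) * Real.sqrt (1 - ⟪u, w⟫ ^ 2) ≤ ⟪v, w⟫ := by
  set a := ⟪u, v⟫ with ha
  set b := ⟪u, w⟫ with hb
  have hvu : ⟪v, u⟫ = a := by rw [ha, real_inner_comm]
  have hwu : ⟪w, u⟫ = b := by rw [hb, real_inner_comm]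
  have huu : ⟪u, u⟫ = 1 := by
    rw [real_inner_self_eq_norm_sq, hu]; norm_num
  have expand : ∀ (x : E) (c : ℝ) (y : E) (d : ℝ),
      ⟪x - c • u, y - d • u⟫ = ⟪x, y⟫ - d * ⟪x, u⟫ - c * ⟪u, y⟫ + c * d := by
    intro x c y d
    rw [inner_sub_left, inner_sub_right, inner_sub_right, real_inner_smul_left,
      real_inner_smul_left, real_inner_smul_right, real_inner_smul_right, huu]
    ring
  have hnv : ‖v - a • u‖ = Real.sqrt (1 - a ^ 2) := by
    rw [← Real.sqrt_sq (norm_nonneg _)]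
    congr 1
    rw [← real_inner_self_eq_norm_sq, expand, real_inner_self_eq_norm_sq, hv, hvu]
    ring
  have hnw : ‖w - b • u‖ = Real.sqrt (1 - b ^ 2) := by
    rw [← Real.sqrt_sq (norm_nonneg _)]
    congr 1
    rw [← real_inner_self_eq_norm_sq, expand, real_inner_self_eq_norm_sq, hw, hwu]
    ring
  have h1 : ⟪v - a • u, w - b • u⟫ = ⟪v, w⟫ - a * b := by
    rw [expand, hvu, ← hb]
    ring
  have h2 := abs_real_inner_le_norm (v - a • u) (w - b • u)
  rw [h1, hnv, hnw] at h2
  have h3 := (abs_le.mp h2).1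
  linarith

private lemma arccos_triangle {E : Type*} [NormedAddCommGroup E] [InnerProductSpace ℝ E]
    {u v w : E} (hu : ‖u‖ = 1) (hv : ‖v‖ = 1) (hw : ‖w‖ = 1) :
    Real.arccos ⟪v, w⟫ ≤ Real.arccos ⟪u, v⟫ + Real.arccos ⟪u, w⟫ := by
  set α := Real.arccos ⟪u, v⟫ with hα
  set β := Real.arccos ⟪u, w⟫ with hβ
  by_cases h : π ≤ α + β
  · exact le_trans (Real.arccos_le_pi _) h
  push_neg at h
  have habs : |⟪u, v⟫| ≤ 1 := by
    have := abs_real_inner_le_norm u v; rwa [hu, hv, mul_one] at this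
  have habs' : |⟪u, w⟫| ≤ 1 := by
    have := abs_real_inner_le_norm u w; rwa [hu, hw, mul_one] at this
  have hca : Real.cos α = ⟪u, v⟫ := Real.cos_arccos (abs_le.mp habs).1 (abs_le.mp habs).2
  have hcb : Real.cos β = ⟪u, w⟫ := Real.cos_arccos (abs_le.mp habs').1 (abs_le.mp habs').2
  have key : Real.cos (α + β) ≤ ⟪v, w⟫ := by
    rw [Real.cos_add, hca, hcb, hα, hβ, Real.sin_arccos, Real.sin_arccos]
    exact inner_lower_bound hu hv hw
  calc Real.arccos ⟪v, w⟫ ≤ Real.arccos (Real.cos (α + β)) := arccos_anti key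
    _ = α + β := Real.arccos_cos (add_nonneg (Real.arccos_nonneg _) (Real.arccos_nonneg _)) h.le

private noncomputable def v3 (x y z : ℝ) : EuclideanSpace ℝ (Fin 3) :=
  (WithLp.equiv 2 (Fin 3 → ℝ)).symm ![x, y, z]

private lemma inner_v3 (a b c d e f : ℝ) : ⟪v3 a b c, v3 d e f⟫ = a * d + b * e + c * f := by
  simp [v3, PiLp.inner_apply, Fin.sum_univ_three, RCLike.inner_apply]
  ring

private lemma norm_v3 {a b c : ℝ} (h : a ^ 2 + b ^ 2 + c ^ 2 = 1) : ‖v3 a b c‖ = 1 := by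
  have : ‖v3 a b c‖ = Real.sqrt (a ^ 2 + b ^ 2 + c ^ 2) := by
    simp [v3, EuclideanSpace.norm_eq, Fin.sum_univ_three, Real.norm_eq_abs, sq_abs]
  rw [this, h, Real.sqrt_one]

theorem spherical_triangle_exists_iff (l12 l13 l23 : ℝ)
    (h12 : l12 ∈ Set.Icc 0 π) (h13 : l13 ∈ Set.Icc 0 π) (h23 : l23 ∈ Set.Icc 0 π) :
    (∃ u : Fin 3 → EuclideanSpace ℝ (Fin 3),
      (∀ i, ‖u i‖ = 1) ∧
      Real.arccos ⟪u 0, u 1⟫ = l12 ∧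
      Real.arccos ⟪u 0, u 2⟫ = l13 ∧
      Real.arccos ⟪u 1, u 2⟫ = l23) ↔
    (l12 ≤ l13 + l23 ∧ l13 ≤ l12 + l23 ∧ l23 ≤ l12 + l13 ∧ l12 + l13 + l23 ≤ 2 * π) := by
  constructor
  · rintro ⟨u, hn, e12, e13, e23⟩
    have h0 := hn 0
    have h1 := hn 1
    have h2 := hn 2
    have comm01 : Real.arccos ⟪u 1, u 0⟫ = l12 := by rw [real_inner_comm]; exact e12
    have comm02 : Real.arccos ⟪u 2, u 0⟫ = l13 := by rw [real_inner_comm]; exact e13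
    have comm12 : Real.arccos ⟪u 2, u 1⟫ = l23 := by rw [real_inner_comm]; exact e23
    refine ⟨?_, ?_, ?_, ?_⟩
    · have := arccos_triangle h2 h0 h1
      rw [e12, comm02, comm12] at this; linarith
    · have := arccos_triangle h1 h0 h2
      rw [e13, comm01, e23] at this; linarith
    · have := arccos_triangle h0 h1 h2
      rw [e23, e12, e13] at this; linarith
    · have hneg : ‖-(u 0)‖ = 1 := by rw [norm_neg]; exact h0
      have := arccos_triangle hneg h1 h2
      rw [e23, inner_neg_left, inner_neg_left, Real.arccos_neg, Real.arccos_neg,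
        e12, e13] at this
      linarith
  · rintro ⟨t1, t2, t3, t4⟩
    set N := Real.cos l23 - Real.cos l12 * Real.cos l13 with hN
    set D := Real.sin l12 * Real.sin l13 with hD
    have hs12 : 0 ≤ Real.sin l12 := Real.sin_nonneg_of_nonneg_of_le_pi h12.1 h12.2
    have hs13 : 0 ≤ Real.sin l13 := Real.sin_nonneg_of_nonneg_of_le_pi h13.1 h13.2
    have hD0 : 0 ≤ D := mul_nonneg hs12 hs13
    have hN1 : N ≤ D := by
      have habs : |l12 - l13| ≤ l23 := abs_sub_le_iff.mpr ⟨by linarith, by linarith⟩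
      have hc : Real.cos l23 ≤ Real.cos |l12 - l13| :=
        Real.cos_le_cos_of_nonneg_of_le_pi (abs_nonneg _) h23.2 habs
      rw [Real.cos_abs, Real.cos_sub] at hc
      simp only [hN, hD]
      linarith
    have hN2 : -D ≤ N := by
      have hc : Real.cos (l12 + l13) ≤ Real.cos l23 := by
        by_cases hp : l12 + l13 ≤ π
        · exact Real.cos_le_cos_of_nonneg_of_le_pi h23.1 hp (by linarith)
        · push_neg at hp
          rw [← Real.cos_two_pi_sub (l12 + l13)]
          exact Real.cos_le_cos_of_nonneg_of_le_pi h23.1 (by linarith) (by linarith)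
      rw [Real.cos_add] at hc
      simp only [hN, hD]
      linarith
    set c := N / D with hc
    have hcD : c * D = N := by
      rcases eq_or_lt_of_le hD0 with h | h
      · have hN0 : N = 0 := le_antisymm (by linarith [h.symm ▸ hN1]) (by linarith [h.symm ▸ hN2])
        rw [hN0, hc, hN0]; simp
      · rw [hc]; field_simp
    have hc2 : c ^ 2 ≤ 1 := by
      rcases eq_or_lt_of_le hD0 with h | h
      · rw [hc, ← h, div_zero]; norm_num
      · rw [hc, div_pow, div_le_one (by positivity)]
        exact sq_le_sq' (by linarith) hN1
    set s := Real.sqrt (1 - c ^ 2) with hs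
    have hs2 : s ^ 2 = 1 - c ^ 2 := Real.sq_sqrt (by linarith)
    refine ⟨![v3 1 0 0, v3 (Real.cos l12) (Real.sin l12) 0,
      v3 (Real.cos l13) (Real.sin l13 * c) (Real.sin l13 * s)], ?_, ?_, ?_, ?_⟩
    · intro i
      fin_cases i
      · exact norm_v3 (by norm_num)
      · exact norm_v3 (by nlinarith [Real.sin_sq_add_cos_sq l12])
      · exact norm_v3 (by nlinarith [Real.sin_sq_add_cos_sq l13])
    · show Real.arccos ⟪v3 1 0 0, v3 (Real.cos l12) (Real.sin l12) 0⟫ = l12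
      rw [inner_v3]
      norm_num
      exact Real.arccos_cos h12.1 h12.2
    · show Real.arccos ⟪v3 1 0 0, v3 (Real.cos l13) (Real.sin l13 * c) (Real.sin l13 * s)⟫ = l13
      rw [inner_v3]
      norm_num
      exact Real.arccos_cos h13.1 h13.2
    · show Real.arccos ⟪v3 (Real.cos l12) (Real.sin l12) 0,
        v3 (Real.cos l13) (Real.sin l13 * c) (Real.sin l13 * s)⟫ = l23
      rw [inner_v3]
      have : Real.cos l12 * Real.cos l13 + Real.sin l12 * (Real.sin l13 * c) +
          0 * (Real.sin l13 * s) = Real.cos l23 := by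
        have : Real.sin l12 * (Real.sin l13 * c) = c * D := by rw [hD]; ring
        rw [this, hcD, hN]; ring
      rw [this]
      exact Real.arccos_cos h23.1 h23.2
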